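/- Let t* = 8π√(2/7). The functions x_a(t) = R_{k,φ(t)}(−1/2, 0, z(t)), x_b(t) = R_{k,φ(t)}(1/2, 0, z(t)), ω_a(t) = ω(t) R_{k,φ(t)} ω_a(0), ω_b(t) = ω(t) R_{k,φ(t)} ω_b(0), with z(t) = √(2/3) log(1 − (1/(8π))√(7/2) t), φ(t) = 2√(2/7) log(1 − (1/(8π))√(7/2) t), ω(t) = 1/((1/(8π))√(7/2) t − 1), ω_a(0) = (−√(1/6), −√(7/12), 1/2), ω_b(0) = (√(1/6), √(7/12), 1/2), solve on [0, t*) the system ω_a′ = −(3/(8π)) [K(x_a−x_b, ω_b)/|x_a−x_b|⁵] ω_a, ω_b′ = −(3/(8π)) [K(x_b−x_a, ω_a)/|x_b−x_a|⁵] ω_b, x_a′ = (1/(4π)) ω_b × (x_a−x_b)/|x_a−x_b|³, x_b′ = (1/(4π)) ω_a × (x_b−x_a)/|x_b−x_a|³. -/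

import Mathlib

open Matrix Real

noncomputable def K (x ω : Fin 3 → ℝ) : Matrix (Fin 3) (Fin 3) ℝ :=
  vecMulVec (crossProduct ω x) x + vecMulVec x (crossProduct ω x)

noncomputable def Rz (φ : ℝ) : Matrix (Fin 3) (Fin 3) ℝ :=
  !![Real.cos φ, -Real.sin φ, 0; Real.sin φ, Real.cos φ, 0; 0, 0, 1]

noncomputable def norm3 (v : Fin 3 → ℝ) : ℝ := Real.sqrt (v ⬝ᵥ v)

noncomputable def zf (t : ℝ) : ℝ := Real.sqrt (2/3) * Real.log (1 - (1/(8*π)) * Real.sqrt (7/2) * t)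
noncomputable def φf (t : ℝ) : ℝ := 2 * Real.sqrt (2/7) * Real.log (1 - (1/(8*π)) * Real.sqrt (7/2) * t)
noncomputable def ωf (t : ℝ) : ℝ := 1 / ((1/(8*π)) * Real.sqrt (7/2) * t - 1)

noncomputable def ωa0 : Fin 3 → ℝ := ![-Real.sqrt (1/6), -Real.sqrt (7/12), 1/2]
noncomputable def ωb0 : Fin 3 → ℝ := ![Real.sqrt (1/6), Real.sqrt (7/12), 1/2]

noncomputable def xa (t : ℝ) : Fin 3 → ℝ := Rz (φf t) *ᵥ ![(-1/2 : ℝ), 0, zf t]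
noncomputable def xb (t : ℝ) : Fin 3 → ℝ := Rz (φf t) *ᵥ ![(1/2 : ℝ), 0, zf t]
noncomputable def ωa (t : ℝ) : Fin 3 → ℝ := ωf t • (Rz (φf t) *ᵥ ωa0)
noncomputable def ωb (t : ℝ) : Fin 3 → ℝ := ωf t • (Rz (φf t) *ᵥ ωb0)

lemma xa_apply (t : ℝ) : xa t = ![-(1/2) * Real.cos (φf t), -(1/2) * Real.sin (φf t), zf t] := by
  funext i; fin_cases i <;>
    simp [xa, Rz, Matrix.mulVec, dotProduct, Fin.sum_univ_three] <;> first | tauto | ring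

lemma xb_apply (t : ℝ) : xb t = ![(1/2) * Real.cos (φf t), (1/2) * Real.sin (φf t), zf t] := by
  funext i; fin_cases i <;>
    simp [xb, Rz, Matrix.mulVec, dotProduct, Fin.sum_univ_three] <;> first | tauto | ring

lemma ωa_apply (t : ℝ) : ωa t =
    ![ωf t * (-Real.sqrt (1/6) * Real.cos (φf t) + Real.sqrt (7/12) * Real.sin (φf t)),
      ωf t * (-Real.sqrt (1/6) * Real.sin (φf t) - Real.sqrt (7/12) * Real.cos (φf t)),
      ωf t * (1/2)] := by
  funext i; fin_cases i <;>
    simp [ωa, ωa0, Rz, Matrix.mulVec, dotProduct, Fin.sum_univ_three] <;> first | tauto | ring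

lemma ωb_apply (t : ℝ) : ωb t =
    ![ωf t * (Real.sqrt (1/6) * Real.cos (φf t) - Real.sqrt (7/12) * Real.sin (φf t)),
      ωf t * (Real.sqrt (1/6) * Real.sin (φf t) + Real.sqrt (7/12) * Real.cos (φf t)),
      ωf t * (1/2)] := by
  funext i; fin_cases i <;>
    simp [ωb, ωb0, Rz, Matrix.mulVec, dotProduct, Fin.sum_univ_three] <;> first | tauto | ring

lemma dab (t : ℝ) : xa t - xb t = ![-Real.cos (φf t), -Real.sin (φf t), 0] := by
  funext i; fin_cases i <;> simp [xa_apply, xb_apply] <;> ring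

lemma dba (t : ℝ) : xb t - xa t = ![Real.cos (φf t), Real.sin (φf t), 0] := by
  funext i; fin_cases i <;> simp [xa_apply, xb_apply] <;> ring

lemma norm_dab (t : ℝ) : norm3 (xa t - xb t) = 1 := by
  rw [dab]; unfold norm3
  rw [show (![-Real.cos (φf t), -Real.sin (φf t), 0] ⬝ᵥ ![-Real.cos (φf t), -Real.sin (φf t), 0]) = 1 by
    simp [dotProduct, Fin.sum_univ_three]; linear_combination sin_sq_add_cos_sq (φf t)]
  exact Real.sqrt_one

lemma norm_dba (t : ℝ) : norm3 (xb t - xa t) = 1 := by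
  rw [dba]; unfold norm3
  rw [show (![Real.cos (φf t), Real.sin (φf t), 0] ⬝ᵥ ![Real.cos (φf t), Real.sin (φf t), 0]) = 1 by
    simp [dotProduct, Fin.sum_univ_three]; linear_combination sin_sq_add_cos_sq (φf t)]
  exact Real.sqrt_one
section
variable {t : ℝ}

lemma sqrt_facts : Real.sqrt (7/12) = Real.sqrt (7/2) * Real.sqrt (1/6) := by
  rw [← Real.sqrt_mul (by norm_num)]; norm_num

lemma h27 : Real.sqrt (2/7) * Real.sqrt (7/2) = 1 := by
  rw [← Real.sqrt_mul (by norm_num)]; norm_num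

lemma h23 : Real.sqrt (2/3) * Real.sqrt (7/2) = 2 * Real.sqrt (7/12) := by
  rw [← Real.sqrt_mul (by norm_num), show (2:ℝ)/3*(7/2) = 7/3 by norm_num,
    show (7:ℝ)/3 = 2^2*(7/12) by norm_num, Real.sqrt_mul (by positivity),
    Real.sqrt_sq (by norm_num)]

lemma hu_pos (ht0 : 0 ≤ t) (ht1 : t < 8 * π * Real.sqrt (2/7)) :
    0 < 1 - 1/(8*π) * Real.sqrt (7/2) * t := by
  have hπ : (0:ℝ) < π := Real.pi_pos
  have hq : (0:ℝ) < 1/(8*π) * Real.sqrt (7/2) := by positivity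
  have hub : 1/(8*π) * Real.sqrt (7/2) * (8 * π * Real.sqrt (2/7)) = 1 := by
    have h1 : π * π⁻¹ = 1 := mul_inv_cancel₀ (ne_of_gt hπ)
    calc 1/(8*π) * Real.sqrt (7/2) * (8 * π * Real.sqrt (2/7))
        = (Real.sqrt (2/7) * Real.sqrt (7/2)) * (π * π⁻¹) := by ring
      _ = 1 := by rw [h27, h1, mul_one]
  nlinarith [mul_lt_mul_of_pos_left ht1 hq]

lemma hωval : ωf t = (1/(8*π) * Real.sqrt (7/2) * t - 1)⁻¹ := by
  unfold ωf; rw [one_div]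

lemma hωval' : ωf t = -(1 - 1/(8*π) * Real.sqrt (7/2) * t)⁻¹ := by
  rw [hωval, show (1:ℝ)/(8*π) * Real.sqrt (7/2) * t - 1
    = -(1 - 1/(8*π) * Real.sqrt (7/2) * t) by ring, inv_neg]

lemma hlin : HasDerivAt (fun s : ℝ => 1 - 1/(8*π) * Real.sqrt (7/2) * s)
    (-(1/(8*π) * Real.sqrt (7/2))) t := by
  simpa using ((hasDerivAt_id t).const_mul (1/(8*π) * Real.sqrt (7/2))).const_sub 1

lemma hφ' (hu : 0 < 1 - 1/(8*π) * Real.sqrt (7/2) * t) :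
    HasDerivAt φf (ωf t * (1/(4*π))) t := by
  have h := (hlin.log (ne_of_gt hu)).const_mul (2 * Real.sqrt (2/7))
  refine (h).congr_deriv (Eq.symm ?_)
  rw [hωval']
  linear_combination (((1 - 1/(8*π) * Real.sqrt (7/2) * t)⁻¹) / (4*π)) * h27

lemma hz' (hu : 0 < 1 - 1/(8*π) * Real.sqrt (7/2) * t) :
    HasDerivAt zf (Real.sqrt (7/2) * Real.sqrt (1/6) * ωf t * (1/(4*π))) t := by
  have h := (hlin.log (ne_of_gt hu)).const_mul (Real.sqrt (2/3))
  refine (h).congr_deriv (Eq.symm ?_)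
  rw [hωval', ← sqrt_facts]
  linear_combination (((1 - 1/(8*π) * Real.sqrt (7/2) * t)⁻¹) / (8*π)) * h23

lemma hw' (hu : 0 < 1 - 1/(8*π) * Real.sqrt (7/2) * t) :
    HasDerivAt ωf (-(1/(8*π) * Real.sqrt (7/2)) * (ωf t)^2) t := by
  have hv : 1/(8*π) * Real.sqrt (7/2) * t - 1 ≠ 0 := by intro h'; nlinarith
  have h1 : HasDerivAt (fun s : ℝ => 1/(8*π) * Real.sqrt (7/2) * s - 1)
      (1/(8*π) * Real.sqrt (7/2)) t := by
    simpa using ((hasDerivAt_id t).const_mul (1/(8*π) * Real.sqrt (7/2))).sub_const 1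
  have h2 := h1.inv hv
  simp only [← one_div] at h2
  have h3 : HasDerivAt ωf
      (-(1/(8*π) * Real.sqrt (7/2)) / (1/(8*π) * Real.sqrt (7/2) * t - 1)^2) t := h2
  refine (h3).congr_deriv (Eq.symm ?_)
  rw [hωval, inv_pow, ← div_eq_mul_inv]

end
lemma fin2_eta (h : 2 < 3) : (⟨2, h⟩ : Fin 3) = 2 := rfl

lemma K_mulVec (x w v : Fin 3 → ℝ) : K x w *ᵥ v =
    ![(w 1 * x 2 - w 2 * x 1) * (x 0 * v 0 + x 1 * v 1 + x 2 * v 2) +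
        x 0 * ((w 1 * x 2 - w 2 * x 1) * v 0 + (w 2 * x 0 - w 0 * x 2) * v 1 +
          (w 0 * x 1 - w 1 * x 0) * v 2),
      (w 2 * x 0 - w 0 * x 2) * (x 0 * v 0 + x 1 * v 1 + x 2 * v 2) +
        x 1 * ((w 1 * x 2 - w 2 * x 1) * v 0 + (w 2 * x 0 - w 0 * x 2) * v 1 +
          (w 0 * x 1 - w 1 * x 0) * v 2),
      (w 0 * x 1 - w 1 * x 0) * (x 0 * v 0 + x 1 * v 1 + x 2 * v 2) +
        x 2 * ((w 1 * x 2 - w 2 * x 1) * v 0 + (w 2 * x 0 - w 0 * x 2) * v 1 +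
          (w 0 * x 1 - w 1 * x 0) * v 2)] := by
  funext i; fin_cases i <;>
    simp [K, Matrix.mulVec, Matrix.vecMulVec_apply, dotProduct, Fin.sum_univ_three,
      cross_apply, Matrix.add_apply, -Matrix.cons_vecMulVec, -Matrix.vecMulVec_cons] <;> ring
/-- The exact rotationally symmetric solution satisfies the point-vortex system on `[0, t*)`,
`t* = 8π√(2/7)`. -/
theorem exact_solution :
    ∀ t ∈ Set.Ico (0 : ℝ) (8 * π * Real.sqrt (2/7)),
      HasDerivAt ωa
        ((-(3 / (8 * π)) * (1 / norm3 (xa t - xb t) ^ 5)) • (K (xa t - xb t) (ωb t) *ᵥ ωa t)) t ∧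
      HasDerivAt ωb
        ((-(3 / (8 * π)) * (1 / norm3 (xb t - xa t) ^ 5)) • (K (xb t - xa t) (ωa t) *ᵥ ωb t)) t ∧
      HasDerivAt xa
        ((1 / (4 * π) * (1 / norm3 (xa t - xb t) ^ 3)) • crossProduct (ωb t) (xa t - xb t)) t ∧
      HasDerivAt xb
        ((1 / (4 * π) * (1 / norm3 (xb t - xa t) ^ 3)) • crossProduct (ωa t) (xb t - xa t)) t := by
  intro t ht
  obtain ⟨ht0, ht1⟩ := ht
  have hu := hu_pos ht0 ht1
  have hφ := hφ' hu
  have hz := hz' hu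
  have hw := hw' hu
  have hcos := hφ.cos
  have hsin := hφ.sin
  have hsc := sin_sq_add_cos_sq (φf t)
  have hr2 : Real.sqrt (7/2)^2 = 7/2 := Real.sq_sqrt (by norm_num)
  have hA2 : Real.sqrt (1/6)^2 = 1/6 := Real.sq_sqrt (by norm_num)
  set S := Real.sin (φf t) with hS
  set C := Real.cos (φf t) with hC
  set w := ωf t with hww
  refine ⟨?_, ?_, ?_, ?_⟩
  · -- ωa equation
    rw [norm_dab, dab, ωa_apply t, ωb_apply t, sqrt_facts, K_mulVec]
    rw [hasDerivAt_pi]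
    intro i; fin_cases i
    · refine HasDerivAt.congr_of_eventuallyEq
        (f := fun s => ωf s * (-Real.sqrt (1/6) * Real.cos (φf s) + Real.sqrt (7/12) * Real.sin (φf s))) ?_
        (Filter.Eventually.of_forall fun s => by simp [ωa_apply])
      refine (hw.mul ((hcos.const_mul (-Real.sqrt (1/6))).add
        (hsin.const_mul (Real.sqrt (7/12))))).congr_deriv (Eq.symm ?_)
      rw [sqrt_facts]
      simp only [Fin.zero_eta, Fin.mk_one, fin2_eta, Pi.smul_apply, smul_eq_mul, Pi.add_apply, Pi.sub_apply,
        Matrix.cons_val_zero, Matrix.cons_val_one, Matrix.head_cons, Matrix.cons_val_two,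
        Matrix.tail_cons]
      linear_combination ((3/8 * C * w^2 * Real.sqrt (1/6) * Real.sqrt (7/2)
          - 3/16 * S * w^2 * Real.sqrt (1/6)) / π) * hsc
        + ((1/8) * S * w^2 * Real.sqrt (1/6) / π) * hr2
    · refine HasDerivAt.congr_of_eventuallyEq
        (f := fun s => ωf s * (-Real.sqrt (1/6) * Real.sin (φf s) - Real.sqrt (7/12) * Real.cos (φf s))) ?_
        (Filter.Eventually.of_forall fun s => by simp [ωa_apply])
      refine (hw.mul ((hsin.const_mul (-Real.sqrt (1/6))).sub
        (hcos.const_mul (Real.sqrt (7/12))))).congr_deriv (Eq.symm ?_)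
      rw [sqrt_facts]
      simp only [Fin.zero_eta, Fin.mk_one, fin2_eta, Pi.smul_apply, smul_eq_mul, Pi.add_apply, Pi.sub_apply,
        Matrix.cons_val_zero, Matrix.cons_val_one, Matrix.head_cons, Matrix.cons_val_two,
        Matrix.tail_cons]
      linear_combination ((3/16 * C * w^2 * Real.sqrt (1/6)
          + 3/8 * S * w^2 * Real.sqrt (1/6) * Real.sqrt (7/2)) / π) * hsc
        + (-(1/8) * C * w^2 * Real.sqrt (1/6) / π) * hr2
    · refine HasDerivAt.congr_of_eventuallyEq
        (f := fun s => ωf s * (1/2)) ?_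
        (Filter.Eventually.of_forall fun s => by simp [ωa_apply])
      refine (hw.mul_const (1/2 : ℝ)).congr_deriv (Eq.symm ?_)
      simp only [Fin.zero_eta, Fin.mk_one, fin2_eta, Pi.smul_apply, smul_eq_mul,
        Matrix.cons_val_zero, Matrix.cons_val_one, Matrix.head_cons, Matrix.cons_val_two,
        Matrix.tail_cons]
      linear_combination (-3/8 * w^2 * Real.sqrt (1/6)^2 * Real.sqrt (7/2) * (1 + C^2 + S^2) / π) * hsc
        + (-3/8 * w^2 * Real.sqrt (7/2) / π) * hA2
  · -- ωb equation
    rw [norm_dba, dba, ωa_apply t, ωb_apply t, sqrt_facts, K_mulVec]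
    rw [hasDerivAt_pi]
    intro i; fin_cases i
    · refine HasDerivAt.congr_of_eventuallyEq
        (f := fun s => ωf s * (Real.sqrt (1/6) * Real.cos (φf s) - Real.sqrt (7/12) * Real.sin (φf s))) ?_
        (Filter.Eventually.of_forall fun s => by simp [ωb_apply])
      refine (hw.mul ((hcos.const_mul (Real.sqrt (1/6))).sub
        (hsin.const_mul (Real.sqrt (7/12))))).congr_deriv (Eq.symm ?_)
      rw [sqrt_facts]
      simp only [Fin.zero_eta, Fin.mk_one, fin2_eta, Pi.smul_apply, smul_eq_mul, Pi.add_apply, Pi.sub_apply,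
        Matrix.cons_val_zero, Matrix.cons_val_one, Matrix.head_cons, Matrix.cons_val_two,
        Matrix.tail_cons]
      linear_combination ((-3/8 * C * w^2 * Real.sqrt (1/6) * Real.sqrt (7/2)
          + 3/16 * S * w^2 * Real.sqrt (1/6)) / π) * hsc
        + (-(1/8) * S * w^2 * Real.sqrt (1/6) / π) * hr2
    · refine HasDerivAt.congr_of_eventuallyEq
        (f := fun s => ωf s * (Real.sqrt (1/6) * Real.sin (φf s) + Real.sqrt (7/12) * Real.cos (φf s))) ?_
        (Filter.Eventually.of_forall fun s => by simp [ωb_apply])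
      refine (hw.mul ((hsin.const_mul (Real.sqrt (1/6))).add
        (hcos.const_mul (Real.sqrt (7/12))))).congr_deriv (Eq.symm ?_)
      rw [sqrt_facts]
      simp only [Fin.zero_eta, Fin.mk_one, fin2_eta, Pi.smul_apply, smul_eq_mul, Pi.add_apply, Pi.sub_apply,
        Matrix.cons_val_zero, Matrix.cons_val_one, Matrix.head_cons, Matrix.cons_val_two,
        Matrix.tail_cons]
      linear_combination ((-3/16 * C * w^2 * Real.sqrt (1/6)
          - 3/8 * S * w^2 * Real.sqrt (1/6) * Real.sqrt (7/2)) / π) * hsc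
        + ((1/8) * C * w^2 * Real.sqrt (1/6) / π) * hr2
    · refine HasDerivAt.congr_of_eventuallyEq
        (f := fun s => ωf s * (1/2)) ?_
        (Filter.Eventually.of_forall fun s => by simp [ωb_apply])
      refine (hw.mul_const (1/2 : ℝ)).congr_deriv (Eq.symm ?_)
      simp only [Fin.zero_eta, Fin.mk_one, fin2_eta, Pi.smul_apply, smul_eq_mul,
        Matrix.cons_val_zero, Matrix.cons_val_one, Matrix.head_cons, Matrix.cons_val_two,
        Matrix.tail_cons]
      linear_combination (-3/8 * w^2 * Real.sqrt (1/6)^2 * Real.sqrt (7/2) * (1 + C^2 + S^2) / π) * hsc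
        + (-3/8 * w^2 * Real.sqrt (7/2) / π) * hA2
  · -- xa equation
    rw [norm_dab, dab, ωb_apply t, sqrt_facts]
    rw [hasDerivAt_pi]
    intro i; fin_cases i
    · refine HasDerivAt.congr_of_eventuallyEq (f := fun s => -(1/2) * Real.cos (φf s)) ?_
        (Filter.Eventually.of_forall fun s => by simp [xa_apply])
      refine (hcos.const_mul (-(1/2) : ℝ)).congr_deriv (Eq.symm ?_)
      simp only [Fin.zero_eta, Fin.mk_one, fin2_eta, Pi.smul_apply, smul_eq_mul, cross_apply,
        Matrix.cons_val_zero, Matrix.cons_val_one, Matrix.head_cons, Matrix.cons_val_two,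
        Matrix.tail_cons]
      ring
    · refine HasDerivAt.congr_of_eventuallyEq (f := fun s => -(1/2) * Real.sin (φf s)) ?_
        (Filter.Eventually.of_forall fun s => by simp [xa_apply])
      refine (hsin.const_mul (-(1/2) : ℝ)).congr_deriv (Eq.symm ?_)
      simp only [Fin.zero_eta, Fin.mk_one, fin2_eta, Pi.smul_apply, smul_eq_mul, cross_apply,
        Matrix.cons_val_zero, Matrix.cons_val_one, Matrix.head_cons, Matrix.cons_val_two,
        Matrix.tail_cons]
      ring
    · refine HasDerivAt.congr_of_eventuallyEq (f := fun s => zf s) ?_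
        (Filter.Eventually.of_forall fun s => by simp [xa_apply])
      refine (hz).congr_deriv (Eq.symm ?_)
      simp only [Fin.zero_eta, Fin.mk_one, fin2_eta, Pi.smul_apply, smul_eq_mul, cross_apply,
        Matrix.cons_val_zero, Matrix.cons_val_one, Matrix.head_cons, Matrix.cons_val_two,
        Matrix.tail_cons]
      linear_combination (w * Real.sqrt (1/6) * Real.sqrt (7/2) / (4*π)) * hsc
  · -- xb equation
    rw [norm_dba, dba, ωa_apply t, sqrt_facts]
    rw [hasDerivAt_pi]
    intro i; fin_cases i
    · refine HasDerivAt.congr_of_eventuallyEq (f := fun s => (1/2) * Real.cos (φf s)) ?_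
        (Filter.Eventually.of_forall fun s => by simp [xb_apply])
      refine (hcos.const_mul ((1/2) : ℝ)).congr_deriv (Eq.symm ?_)
      simp only [Fin.zero_eta, Fin.mk_one, fin2_eta, Pi.smul_apply, smul_eq_mul, cross_apply,
        Matrix.cons_val_zero, Matrix.cons_val_one, Matrix.head_cons, Matrix.cons_val_two,
        Matrix.tail_cons]
      ring
    · refine HasDerivAt.congr_of_eventuallyEq (f := fun s => (1/2) * Real.sin (φf s)) ?_
        (Filter.Eventually.of_forall fun s => by simp [xb_apply])
      refine (hsin.const_mul ((1/2) : ℝ)).congr_deriv (Eq.symm ?_)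
      simp only [Fin.zero_eta, Fin.mk_one, fin2_eta, Pi.smul_apply, smul_eq_mul, cross_apply,
        Matrix.cons_val_zero, Matrix.cons_val_one, Matrix.head_cons, Matrix.cons_val_two,
        Matrix.tail_cons]
      ring
    · refine HasDerivAt.congr_of_eventuallyEq (f := fun s => zf s) ?_
        (Filter.Eventually.of_forall fun s => by simp [xb_apply])
      refine (hz).congr_deriv (Eq.symm ?_)
      simp only [Fin.zero_eta, Fin.mk_one, fin2_eta, Pi.smul_apply, smul_eq_mul, cross_apply,
        Matrix.cons_val_zero, Matrix.cons_val_one, Matrix.head_cons, Matrix.cons_val_two,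
        Matrix.tail_cons]
      linear_combination (w * Real.sqrt (1/6) * Real.sqrt (7/2) / (4*π)) * hsc
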